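/- Let M be a paving matroid of rank d ≥ 2 on ground set [n] with E its collection of dependent hyperplanes, and let x ∈ [n] not be a coloop. Then the collection of dependent hyperplanes of the contraction M / x equals {H \ {x} : H ∈ E, x ∈ H}. -/

import Mathlib

/-- A hyperplane of a matroid: a maximal proper flat. -/
def Matroid.IsHyperplane' {α : Type*} (M : Matroid α) (H : Set α) : Prop :=
  M.IsFlat H ∧ H ≠ M.E ∧ ∀ F, M.IsFlat F → H ⊂ F → F = M.E

/-- The contraction of a single element, defined by duality:
`M / x = (M✶ − x)✶`. -/
noncomputable def Matroid.contractElem' {α : Type*} (M : Matroid α) (x : α) : Matroid α :=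
  ((M✶.restrict (M✶.E \ {x})))✶

namespace StmtNineAux

open Set Matroid

variable {α : Type*} {M : Matroid α}

lemma flat_closure (M : Matroid α) (X : Set α) : M.IsFlat (M.closure X) := by
  rw [Matroid.closure_eq_subtypeClosure]
  exact (Matroid.isClosed_iff_isFlat).1 (M.subtypeClosure.isClosed_closure _)

lemma flat_iff_closure_eq {F : Set α} : M.IsFlat F ↔ M.closure F = F ∧ F ⊆ M.E :=
  ⟨fun h ↦ ⟨h.closure, h.subset_ground⟩, fun ⟨h1, _⟩ ↦ h1 ▸ flat_closure M F⟩

variable {x : α} (hxl : M.Indep {x}) (hE : M.E = Set.univ)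

include hE in
lemma ground_eq : (M.contractElem' x).E = {x}ᶜ := by
  simp [Matroid.contractElem', hE, Set.compl_eq_univ_diff]

include hxl hE in
lemma base_iff {B : Set α} :
    (M.contractElem' x).IsBase B ↔ x ∉ B ∧ M.IsBase (insert x B) := by
  have hD : M✶.E \ {x} ⊆ M✶.E := Set.diff_subset
  have hspan : M✶.Spanning (M✶.E \ {x}) :=
    Matroid.Coindep.compl_spanning (Matroid.dual_coindep_iff.2 hxl)
  have hbasisJ : ∀ J, M✶.IsBasis J (M✶.E \ {x}) ↔ M✶.IsBase J ∧ J ⊆ M✶.E \ {x} := by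
    intro J
    constructor
    · intro hJ
      refine ⟨Matroid.isBase_iff_indep_closure_eq.2 ⟨hJ.indep, ?_⟩, hJ.subset⟩
      rw [hJ.closure_eq_closure, hspan.closure_eq]
    · rintro ⟨hJ, hJss⟩
      exact hJ.indep.isBasis_of_subset_of_subset_closure hJss (by rw [hJ.closure_eq]; exact hD)
  rw [Matroid.contractElem', Matroid.dual_isBase_iff', Matroid.restrict_ground_eq,
    Matroid.isBase_restrict_iff hD, hbasisJ]
  have hxE : x ∈ M.E := hxl.subset_ground rfl
  constructor
  · rintro ⟨⟨hJ, -⟩, hBss⟩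
    have hxB : x ∉ B := fun h ↦ (hBss h).2 rfl
    refine ⟨hxB, ?_⟩
    have := (Matroid.dual_isBase_iff (M := M) (by rw [hE]; exact Set.subset_univ _)).1 hJ
    rwa [show M.E \ ((M✶.E \ {x}) \ B) = insert x B by
      rw [Matroid.dual_ground]
      ext e
      simp only [Set.mem_diff, Set.mem_singleton_iff, Set.mem_insert_iff, hE, Set.mem_univ,
        true_and, not_and, not_not]
      constructor
      · intro h; rcases Classical.em (e = x) with h' | h'
        · exact Or.inl h'
        · exact Or.inr (h h')
      · rintro (rfl | h) h'
        · exact absurd rfl h'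
        · exact h] at this
  · rintro ⟨hxB, hB⟩
    have hBss : B ⊆ M✶.E \ {x} := by
      rw [Matroid.dual_ground, hE]
      exact fun e he ↦ ⟨trivial, fun h ↦ hxB (h ▸ he)⟩
    refine ⟨⟨?_, Set.diff_subset⟩, hBss⟩
    rw [Matroid.dual_isBase_iff (M := M) (by rw [hE]; exact Set.subset_univ _)]
    rwa [show M.E \ ((M✶.E \ {x}) \ B) = insert x B by
      rw [Matroid.dual_ground]
      ext e
      simp only [Set.mem_diff, Set.mem_singleton_iff, Set.mem_insert_iff, hE, Set.mem_univ,
        true_and, not_and, not_not]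
      constructor
      · intro h; rcases Classical.em (e = x) with h' | h'
        · exact Or.inl h'
        · exact Or.inr (h h')
      · rintro (rfl | h) h'
        · exact absurd rfl h'
        · exact h]

include hxl hE in
lemma indep_iff {I : Set α} :
    (M.contractElem' x).Indep I ↔ x ∉ I ∧ M.Indep (insert x I) := by
  constructor
  · intro hI
    obtain ⟨B, hB, hIB⟩ := hI.exists_isBase_superset
    rw [base_iff hxl hE] at hB
    exact ⟨fun h ↦ hB.1 (hIB h), hB.2.indep.subset (Set.insert_subset_insert hIB)⟩
  · rintro ⟨hxI, hI⟩
    obtain ⟨B, hB, hIB⟩ := hI.exists_isBase_superset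
    have hxB : x ∈ B := hIB (Set.mem_insert x I)
    have hB' : (M.contractElem' x).IsBase (B \ {x}) := by
      rw [base_iff hxl hE]
      refine ⟨fun h ↦ h.2 rfl, ?_⟩
      rwa [Set.insert_diff_singleton, Set.insert_eq_of_mem hxB]
    exact hB'.indep.subset fun e he ↦
      ⟨hIB (Set.mem_insert_of_mem _ he), fun h ↦ hxI (h ▸ he)⟩

include hxl hE in
lemma dep_iff' {S : Set α} :
    (M.contractElem' x).Dep S ↔ x ∉ S ∧ M.Dep (insert x S) := by
  rw [Matroid.dep_iff, Matroid.dep_iff, indep_iff hxl hE, ground_eq hE, hE]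
  constructor
  · rintro ⟨h1, h2⟩
    have hxS : x ∉ S := fun h ↦ h2 h rfl
    exact ⟨hxS, fun h ↦ h1 ⟨hxS, h⟩, Set.subset_univ _⟩
  · rintro ⟨hxS, h1, -⟩
    exact ⟨fun h ↦ h1 h.2, fun e he h ↦ hxS (h ▸ he)⟩

include hxl hE in
lemma closure_eq {S : Set α} (hxS : x ∉ S) :
    (M.contractElem' x).closure S = M.closure (insert x S) \ {x} := by
  set N := M.contractElem' x with hN
  have hSss : S ⊆ N.E := by rw [ground_eq hE]; exact fun e he h ↦ hxS (h ▸ he)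
  obtain ⟨I, hI⟩ := N.exists_isBasis S hSss
  have hxI : x ∉ I := fun h ↦ hxS (hI.subset h)
  have hIi : M.Indep (insert x I) := ((indep_iff hxl hE).1 hI.indep).2
  have hMb : M.IsBasis (insert x I) (insert x S) := by
    rw [Matroid.isBasis_iff_indep_closure]
    refine ⟨hIi, ?_, Set.insert_subset_insert hI.subset⟩
    rintro e (rfl | heS)
    · exact M.mem_closure_of_mem (Set.mem_insert _ _) (by rw [hE]; exact Set.subset_univ _)
    · rcases Classical.em (e ∈ I) with heI | heI
      · exact M.mem_closure_of_mem (Set.mem_insert_of_mem _ heI)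
          (by rw [hE]; exact Set.subset_univ _)
      · have hdep : N.Dep (insert e I) := hI.insert_dep ⟨heS, heI⟩
        rw [dep_iff' hxl hE, Set.insert_comm] at hdep
        exact (hIi.insert_dep_iff.1 hdep.2).1
  rw [← hI.closure_eq_closure, ← hMb.closure_eq_closure]
  ext e
  rcases Classical.em (e = x) with rfl | hex
  · simp only [Set.mem_diff, Set.mem_singleton_iff, not_true, and_false, iff_false]
    intro h
    have := N.closure_subset_ground I h
    rw [ground_eq hE] at this
    exact this rfl
  · rw [Set.mem_diff, hI.indep.mem_closure_iff, hIi.mem_closure_iff,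
      dep_iff' hxl hE, Set.insert_comm]
    rw [Set.mem_insert_iff, Set.mem_singleton_iff]
    constructor
    · rintro (⟨-, h⟩ | h)
      · exact ⟨Or.inl h, hex⟩
      · exact ⟨Or.inr (Or.inr h), hex⟩
    · rintro ⟨h | h, -⟩
      · exact Or.inl ⟨fun h'' ↦ h''.elim (fun h3 ↦ hex h3.symm) hxI, h⟩
      · rcases h with rfl | h
        · exact absurd rfl hex
        · exact Or.inr h

include hxl hE in
lemma flat_iff' {F : Set α} :
    (M.contractElem' x).IsFlat F ↔ x ∉ F ∧ M.IsFlat (insert x F) := by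
  set N := M.contractElem' x with hN
  have hNE : N.E = {x}ᶜ := ground_eq hE
  constructor
  · intro hF
    have hxF : x ∉ F := fun h ↦ by
      have h2 := hF.subset_ground h
      rw [hNE] at h2
      exact h2 rfl
    have hcl : N.closure F = F := hF.closure
    rw [closure_eq hxl hE hxF] at hcl
    refine ⟨hxF, flat_iff_closure_eq.2 ⟨?_, by rw [hE]; exact Set.subset_univ _⟩⟩
    apply Set.Subset.antisymm
    · intro e he
      rcases Classical.em (e = x) with rfl | hex
      · exact Set.mem_insert _ _
      · exact Set.mem_insert_of_mem _ (hcl ▸ ⟨he, hex⟩)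
    · exact M.subset_closure _ (by rw [hE]; exact Set.subset_univ _)
  · rintro ⟨hxF, hF⟩
    have : N.closure F = F := by
      rw [closure_eq hxl hE hxF, hF.closure, Set.insert_diff_self_of_notMem hxF]
    refine flat_iff_closure_eq.2 ⟨this, ?_⟩
    rw [ground_eq hE]
    exact fun e he h ↦ hxF (h ▸ he)

end StmtNineAux

open StmtNineAux in
/-- For a paving matroid `M` of rank `d ≥ 2` on `[n]` with `x` not a coloop, the
dependent hyperplanes of the contraction `M / x` are exactly the sets `H \ {x}` where
`H` is a dependent hyperplane of `M` containing `x`. -/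
theorem stmt_9 {n d : ℕ} (M : Matroid (Fin n)) (hE : M.E = Set.univ) (hd : 2 ≤ d)
    (hrank : ∀ B, M.IsBase B → B.ncard = d)
    (hpaving : ∀ D, M.Dep D → d ≤ D.ncard)
    (E : Set (Set (Fin n))) (hEdef : E = {H | M.IsHyperplane' H ∧ M.Dep H})
    (x : Fin n) (hx : ¬ ∀ B, M.IsBase B → x ∈ B) :
    {H | (M.contractElem' x).IsHyperplane' H ∧ (M.contractElem' x).Dep H} =
      {H' | ∃ H ∈ E, x ∈ H ∧ H' = H \ {x}} := by
  have hxl : M.Indep {x} := by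
    by_contra h
    have hdep : M.Dep {x} := ⟨h, by rw [hE]; exact Set.subset_univ _⟩
    have := hpaving _ hdep
    simp [Set.ncard_singleton] at this
    omega
  set N := M.contractElem' x with hN
  have hNE : N.E = {x}ᶜ := ground_eq hE
  ext H'
  simp only [Set.mem_setOf_eq, hEdef]
  constructor
  · rintro ⟨⟨hFl, hne, hmax⟩, hdep⟩
    have hxH' : x ∉ H' ∧ M.IsFlat (insert x H') := (flat_iff' hxl hE).1 hFl
    refine ⟨insert x H', ⟨⟨hxH'.2, ?_, ?_⟩, ?_⟩, Set.mem_insert _ _, ?_⟩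
    · intro h
      apply hne
      rw [hNE]
      apply Set.Subset.antisymm
      · rw [← hNE]; exact hFl.subset_ground
      · intro e he
        have : e ∈ insert x H' := by rw [h, hE]; trivial
        exact this.elim (fun h' ↦ absurd h' he) id
    · intro F hF hssF
      have hxF : x ∈ F := hssF.1 (Set.mem_insert _ _)
      have hFl' : N.IsFlat (F \ {x}) := by
        rw [flat_iff' hxl hE]
        exact ⟨fun h ↦ h.2 rfl, by rwa [Set.insert_diff_singleton, Set.insert_eq_of_mem hxF]⟩
      have hss : H' ⊂ F \ {x} := by
        obtain ⟨y, hyF, hyH⟩ := (Set.ssubset_iff_of_subset hssF.1).1 hssF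
        refine ⟨fun e he ↦ ⟨hssF.1 (Set.mem_insert_of_mem _ he), fun h ↦ hxH'.1 (h ▸ he)⟩, ?_⟩
        intro hcon
        rcases Classical.em (y = x) with rfl | hyx
        · exact hyH (Set.mem_insert _ _)
        · exact hyH (Set.mem_insert_of_mem _ (hcon ⟨hyF, hyx⟩))
      have := hmax _ hFl' hss
      rw [hNE] at this
      rw [hE]
      apply Set.eq_univ_of_forall
      intro e
      rcases Classical.em (e = x) with rfl | hex
      · exact hxF
      · have he2 : e ∈ F \ {x} := by rw [this]; simp [hex]
        exact he2.1
    · have := (dep_iff' hxl hE).1 hdep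
      exact this.2
    · exact (Set.insert_diff_self_of_notMem hxH'.1).symm
  · rintro ⟨H, ⟨⟨hFl, hne, hmax⟩, hdep⟩, hxH, rfl⟩
    have hxH' : x ∉ H \ {x} := fun h ↦ h.2 rfl
    have hins : insert x (H \ {x}) = H := by
      rw [Set.insert_diff_singleton, Set.insert_eq_of_mem hxH]
    constructor
    · refine ⟨(flat_iff' hxl hE).2 ⟨hxH', by rw [hins]; exact hFl⟩, ?_, ?_⟩
      · intro h
        apply hne
        rw [hNE] at h
        rw [hE]
        apply Set.eq_univ_of_forall
        intro e
        rcases Classical.em (e = x) with rfl | hex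
        · exact hxH
        · have he2 : e ∈ H \ {x} := by rw [h]; simp [hex]
          exact he2.1
      · intro F hF hss
        obtain ⟨hxF, hFflat⟩ := (flat_iff' hxl hE).1 hF
        have hssM : H ⊂ insert x F := by
          obtain ⟨y, hyF, hyH⟩ := (Set.ssubset_iff_of_subset hss.1).1 hss
          refine ⟨?_, fun hcon ↦ ?_⟩
          · rw [← hins]; exact Set.insert_subset_insert hss.1
          · have hyx : y ≠ x := fun h ↦ hxF (h ▸ hyF)
            exact hyH ⟨hcon (Set.mem_insert_of_mem _ hyF), hyx⟩
        have := hmax _ hFflat hssM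
        rw [hNE]
        apply Set.Subset.antisymm
        · rw [← hNE]; exact hF.subset_ground
        · intro e he
          have : e ∈ insert x F := by rw [this, hE]; trivial
          exact this.elim (fun h ↦ absurd h he) id
    · rw [dep_iff' hxl hE, hins]
      exact ⟨hxH', hdep⟩
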